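/- For comonotonic random variables X_i^c = F_i^{-1}(U), i = 1, ..., d, with nondegenerate marginals and nonnegative weights w_i not all zero applied to at least two nondegenerate coordinates, the denominator of RHIX, Σ_{i≠j} w_i w_j cov(X_i^c, X_j^c), is strictly positive. -/

import Mathlib

open MeasureTheory ProbabilityTheory Real Filter

noncomputable def cov' {Ω : Type*} [MeasurableSpace Ω] (μ : Measure Ω) (X Y : Ω → ℝ) : ℝ :=
  (∫ ω, X ω * Y ω ∂μ) - (∫ ω, X ω ∂μ) * (∫ ω, Y ω ∂μ)

noncomputable def var' {Ω : Type*} [MeasurableSpace Ω] (μ : Measure Ω) (X : Ω → ℝ) : ℝ :=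
  cov' μ X X

noncomputable def corr' {Ω : Type*} [MeasurableSpace Ω] (μ : Measure Ω) (X Y : Ω → ℝ) : ℝ :=
  cov' μ X Y / (Real.sqrt (var' μ X) * Real.sqrt (var' μ Y))

noncomputable def quantile (ν : Measure ℝ) (p : ℝ) : ℝ := sInf {x | p ≤ cdf ν x}

noncomputable def comono {Ω : Type*} [MeasurableSpace Ω] (μ : Measure Ω) (U : Ω → ℝ) (X : Ω → ℝ) :
    Ω → ℝ :=
  fun ω => quantile (Measure.map X μ) (U ω)

open Set Topology

section Quantile
variable (ν : Measure ℝ) [IsProbabilityMeasure ν]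

lemma quantile_le_iff {p x : ℝ} (hp0 : 0 < p) (hp1 : p < 1) :
    quantile ν p ≤ x ↔ p ≤ cdf ν x := by
  set S := {y | p ≤ cdf ν y} with hS
  have hne : S.Nonempty := ((tendsto_cdf_atTop ν).eventually (eventually_ge_nhds hp1)).exists
  have hbdd : BddBelow S := by
    obtain ⟨x₀, hx₀⟩ := ((tendsto_cdf_atBot ν).eventually (eventually_lt_nhds hp0)).exists
    refine ⟨x₀, fun y hy => ?_⟩
    by_contra hlt
    exact absurd (hy.trans ((monotone_cdf ν) (le_of_lt (not_le.mp hlt)))) (not_le.mpr hx₀)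
  constructor
  · intro h
    have key : p ≤ cdf ν (sInf S) := by
      have hev : ∀ᶠ y in 𝓝[>] (sInf S), p ≤ cdf ν y := by
        filter_upwards [self_mem_nhdsWithin] with y hy
        obtain ⟨s, hs, hsy⟩ := exists_lt_of_csInf_lt hne hy
        exact hs.trans ((monotone_cdf ν) hsy.le)
      have htend : Tendsto (cdf ν) (𝓝[>] (sInf S)) (𝓝 (cdf ν (sInf S))) :=
        ((cdf ν).right_continuous _).tendsto.mono_left (nhdsWithin_mono _ Ioi_subset_Ici_self)
      exact ge_of_tendsto htend hev
    exact key.trans ((monotone_cdf ν) h)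
  · intro h
    exact csInf_le hbdd h

lemma quantile_monoOn : MonotoneOn (quantile ν) (Ioo 0 1) := by
  intro p hp q hq hpq
  rw [quantile_le_iff ν hp.1 hp.2]
  exact hpq.trans ((quantile_le_iff ν hq.1 hq.2).mp le_rfl)

lemma quantile_aemeasurable : AEMeasurable (quantile ν) (volume.restrict (Ioo 0 1)) :=
  aemeasurable_restrict_of_monotoneOn measurableSet_Ioo (quantile_monoOn ν)

instance P_prob : IsProbabilityMeasure (volume.restrict (Ioo (0:ℝ) 1)) :=
  ⟨by simp⟩

lemma map_quantile : Measure.map (quantile ν) (volume.restrict (Ioo 0 1)) = ν := by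
  refine Measure.ext_of_Iic _ _ fun x => ?_
  rw [Measure.map_apply_of_aemeasurable (quantile_aemeasurable ν) measurableSet_Iic,
    Measure.restrict_apply' measurableSet_Ioo]
  have hset : quantile ν ⁻¹' Iic x ∩ Ioo 0 1 = Iic (cdf ν x) ∩ Ioo 0 1 := by
    ext p
    simp only [mem_inter_iff, mem_preimage, mem_Iic, mem_Ioo, and_congr_left_iff]
    intro hp
    rw [quantile_le_iff ν hp.1 hp.2]
  rw [hset, ← ofReal_cdf ν x]
  rcases lt_or_eq_of_le (cdf_le_one ν x) with hc | hc
  · have : Iic (cdf ν x) ∩ Ioo 0 1 = Ioc 0 (cdf ν x) := by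
      ext p
      simp only [mem_inter_iff, mem_Iic, mem_Ioo, mem_Ioc]
      exact ⟨fun h => ⟨h.2.1, h.1⟩, fun h => ⟨h.2, h.1, lt_of_le_of_lt h.2 hc⟩⟩
    rw [this, Real.volume_Ioc, sub_zero]
  · have : Iic (cdf ν x) ∩ Ioo 0 1 = Ioo 0 1 := by
      rw [inter_eq_self_of_subset_right]
      intro p hp
      exact (mem_Iic).mpr (hp.2.le.trans hc.ge)
    rw [this, Real.volume_Ioo, hc]; norm_num
end Quantile

section Cov

lemma integrable_mul_of_memL2 {α : Type*} [MeasurableSpace α] {Q : Measure α} {f g : α → ℝ}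
    (hf : MemLp f 2 Q) (hg : MemLp g 2 Q) : Integrable (fun x => f x * g x) Q := by
  have h1 : Integrable (fun x => (f x + g x) ^ 2) Q := (hf.add hg).integrable_sq
  have h2 := hf.integrable_sq
  have h3 := hg.integrable_sq
  have heq : (fun x => f x * g x) = fun x => ((f x + g x) ^ 2 - (f x) ^ 2 - (g x) ^ 2) / 2 := by
    ext x; ring
  rw [heq]
  exact ((h1.sub h2).sub h3).div_const 2

local notation "P" => volume.restrict (Ioo (0:ℝ) 1)

variable {f g : ℝ → ℝ}

lemma inner_int (hf : MemLp f 2 P) (hg : MemLp g 2 P) (u : ℝ) :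
    (∫ v, (f u - f v) * (g u - g v) ∂P)
      = f u * g u - f u * (∫ v, g v ∂P) - (∫ v, f v ∂P) * g u + ∫ v, f v * g v ∂P := by
  have hfi : Integrable f P := hf.integrable one_le_two
  have hgi : Integrable g P := hg.integrable one_le_two
  have hfg : Integrable (fun v => f v * g v) P := integrable_mul_of_memL2 hf hg
  have heq : (fun v => (f u - f v) * (g u - g v))
      = fun v => (f u * g u - f u * g v) - (f v * g u - f v * g v) := by ext v; ring
  have i1 : Integrable (fun v => f u * g u - f u * g v) P :=
    (integrable_const _).sub (hgi.const_mul _)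
  have i2 : Integrable (fun v => f v * g u - f v * g v) P := (hfi.mul_const _).sub hfg
  rw [heq, integral_sub i1 i2, integral_sub (integrable_const _) (hgi.const_mul _),
    integral_sub (hfi.mul_const _) hfg,
    integral_const, integral_const_mul, integral_mul_const]
  simp only [measure_univ, ENNReal.toReal_one, smul_eq_mul, one_mul, probReal_univ]
  ring

lemma hFint (hf : MemLp f 2 P) (hg : MemLp g 2 P) (u : ℝ) :
    Integrable (fun v => (f u - f v) * (g u - g v)) P := by
  have hfi : Integrable f P := hf.integrable one_le_two
  have hgi : Integrable g P := hg.integrable one_le_two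
  have hfg : Integrable (fun v => f v * g v) P := integrable_mul_of_memL2 hf hg
  have heq : (fun v => (f u - f v) * (g u - g v))
      = fun v => (f u * g u - f u * g v) - (f v * g u - f v * g v) := by ext v; ring
  rw [heq]
  exact ((integrable_const _).sub (hgi.const_mul _)).sub ((hfi.mul_const _).sub hfg)

lemma F_nonneg (hmf : MonotoneOn f (Ioo 0 1)) (hmg : MonotoneOn g (Ioo 0 1))
    {u v : ℝ} (hu : u ∈ Ioo (0:ℝ) 1) (hv : v ∈ Ioo (0:ℝ) 1) :
    0 ≤ (f u - f v) * (g u - g v) := by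
  rcases le_total u v with h | h
  · nlinarith [hmf hu hv h, hmg hu hv h]
  · exact mul_nonneg (sub_nonneg.mpr (hmf hv hu h)) (sub_nonneg.mpr (hmg hv hu h))

lemma cov'_double (hf : MemLp f 2 P) (hg : MemLp g 2 P) :
    2 * cov' P f g = ∫ u, (∫ v, (f u - f v) * (g u - g v) ∂P) ∂P := by
  have hfi : Integrable f P := hf.integrable one_le_two
  have hgi : Integrable g P := hg.integrable one_le_two
  have hfg : Integrable (fun v => f v * g v) P := integrable_mul_of_memL2 hf hg
  have heq : (fun u => ∫ v, (f u - f v) * (g u - g v) ∂P)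
      = fun u => (f u * g u - f u * (∫ v, g v ∂P)) -
        ((∫ v, f v ∂P) * g u - ∫ v, f v * g v ∂P) := by
    ext u; rw [inner_int hf hg u]; ring
  have i1 : Integrable (fun u => f u * g u - f u * (∫ v, g v ∂P)) P :=
    hfg.sub (hfi.mul_const _)
  have i2 : Integrable (fun u => (∫ v, f v ∂P) * g u - ∫ v, f v * g v ∂P) P :=
    (hgi.const_mul _).sub (integrable_const _)
  rw [heq, integral_sub i1 i2, integral_sub hfg (hfi.mul_const _),
    integral_sub (hgi.const_mul _) (integrable_const _),
    integral_const, integral_const_mul, integral_mul_const]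
  simp only [measure_univ, ENNReal.toReal_one, smul_eq_mul, one_mul, cov', probReal_univ]
  ring

lemma h_nonneg (hf : MemLp f 2 P) (hg : MemLp g 2 P)
    (hmf : MonotoneOn f (Ioo 0 1)) (hmg : MonotoneOn g (Ioo 0 1)) {u : ℝ}
    (hu : u ∈ Ioo (0:ℝ) 1) : 0 ≤ ∫ v, (f u - f v) * (g u - g v) ∂P := by
  refine integral_nonneg_of_ae ?_
  filter_upwards [ae_restrict_mem measurableSet_Ioo] with v hv
  exact F_nonneg hmf hmg hu hv

lemma cov'_nonneg (hf : MemLp f 2 P) (hg : MemLp g 2 P)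
    (hmf : MonotoneOn f (Ioo 0 1)) (hmg : MonotoneOn g (Ioo 0 1)) :
    0 ≤ cov' P f g := by
  have h2 : 0 ≤ 2 * cov' P f g := by
    rw [cov'_double hf hg]
    refine integral_nonneg_of_ae ?_
    filter_upwards [ae_restrict_mem measurableSet_Ioo] with u hu
    exact h_nonneg hf hg hmf hmg hu
  linarith

lemma cov'_pos (hf : MemLp f 2 P) (hg : MemLp g 2 P)
    (hmf : MonotoneOn f (Ioo 0 1)) (hmg : MonotoneOn g (Ioo 0 1))
    (hnf : ∃ u ∈ Ioo (0:ℝ) 1, ∃ v ∈ Ioo (0:ℝ) 1, u < v ∧ f u < f v)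
    (hng : ∃ u ∈ Ioo (0:ℝ) 1, ∃ v ∈ Ioo (0:ℝ) 1, u < v ∧ g u < g v) :
    0 < cov' P f g := by
  obtain ⟨u₀, hu₀, v₀, hv₀, huv₀, hfuv⟩ := hnf
  obtain ⟨u₁, hu₁, v₁, hv₁, huv₁, hguv⟩ := hng
  set a0 := min u₀ u₁ with ha0def
  set b0 := max v₀ v₁ with hb0def
  have ha0 : 0 < a0 := lt_min hu₀.1 hu₁.1
  have ha1 : a0 < 1 := lt_of_le_of_lt (min_le_left _ _) hu₀.2
  have hb0 : b0 < 1 := max_lt hv₀.2 hv₁.2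
  have hb1 : 0 < b0 := lt_of_lt_of_le hv₀.1 (le_max_left _ _)
  have hAsub : Ioo (0:ℝ) a0 ⊆ Ioo 0 1 := Ioo_subset_Ioo le_rfl ha1.le
  have hBsub : Ioo b0 1 ⊆ Ioo (0:ℝ) 1 := Ioo_subset_Ioo hb1.le le_rfl
  set δf := f v₀ - f u₀ with hδf
  set δg := g v₁ - g u₁ with hδg
  have hδfpos : 0 < δf := sub_pos.mpr hfuv
  have hδgpos : 0 < δg := sub_pos.mpr hguv
  have hFbound : ∀ u ∈ Ioo b0 1, ∀ v ∈ Ioo (0:ℝ) a0,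
      δf * δg ≤ (f u - f v) * (g u - g v) := by
    intro u hu v hv
    have h1 : f v ≤ f u₀ := hmf (hAsub hv) hu₀ (le_of_lt (lt_of_lt_of_le hv.2 (min_le_left _ _)))
    have h2 : f v₀ ≤ f u := hmf hv₀ (hBsub hu) (le_of_lt (lt_of_le_of_lt (le_max_left _ _) hu.1))
    have h3 : g v ≤ g u₁ := hmg (hAsub hv) hu₁ (le_of_lt (lt_of_lt_of_le hv.2 (min_le_right _ _)))
    have h4 : g v₁ ≤ g u := hmg hv₁ (hBsub hu) (le_of_lt (lt_of_le_of_lt (le_max_right _ _) hu.1))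
    have hf' : δf ≤ f u - f v := by simp only [hδf]; linarith
    have hg' : δg ≤ g u - g v := by simp only [hδg]; linarith
    exact mul_le_mul hf' hg' hδgpos.le (le_trans hδfpos.le hf')
  have hPA : ((volume.restrict (Ioo (0:ℝ) 1)) (Ioo (0:ℝ) a0)).toReal = a0 := by
    rw [Measure.restrict_apply measurableSet_Ioo, inter_eq_self_of_subset_left hAsub,
      Real.volume_Ioo]
    simp [ha0.le]
  have hPB : ((volume.restrict (Ioo (0:ℝ) 1)) (Ioo b0 1)).toReal = 1 - b0 := by
    rw [Measure.restrict_apply measurableSet_Ioo, inter_eq_self_of_subset_left hBsub,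
      Real.volume_Ioo]
    rw [ENNReal.toReal_ofReal (by linarith)]
  have hinner : ∀ u ∈ Ioo b0 1, δf * δg * a0 ≤ ∫ v, (f u - f v) * (g u - g v) ∂P := by
    intro u hu
    have h1 : ∫ v in Ioo (0:ℝ) a0, (f u - f v) * (g u - g v) ∂P
        ≤ ∫ v, (f u - f v) * (g u - g v) ∂P := by
      refine setIntegral_le_integral (hFint hf hg u) ?_
      filter_upwards [ae_restrict_mem measurableSet_Ioo] with v hv
      exact F_nonneg hmf hmg (hBsub hu) hv
    have h2 : δf * δg * ((volume.restrict (Ioo (0:ℝ) 1)) (Ioo (0:ℝ) a0)).toReal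
        ≤ ∫ v in Ioo (0:ℝ) a0, (f u - f v) * (g u - g v) ∂P :=
      setIntegral_ge_of_const_le_real measurableSet_Ioo (measure_ne_top _ _)
        (fun v hv => hFbound u hu v hv) ((hFint hf hg u).integrableOn)
    rw [hPA] at h2
    linarith
  have houter_int : Integrable (fun u => ∫ v, (f u - f v) * (g u - g v) ∂P) P := by
    have hfi : Integrable f P := hf.integrable one_le_two
    have hgi : Integrable g P := hg.integrable one_le_two
    have hfg : Integrable (fun v => f v * g v) P := integrable_mul_of_memL2 hf hg
    have heq : (fun u => ∫ v, (f u - f v) * (g u - g v) ∂P)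
        = fun u => (f u * g u - f u * (∫ v, g v ∂P)) -
          ((∫ v, f v ∂P) * g u - ∫ v, f v * g v ∂P) := by
      ext u; rw [inner_int hf hg u]; ring
    rw [heq]
    exact (hfg.sub (hfi.mul_const _)).sub ((hgi.const_mul _).sub (integrable_const _))
  have h3 : ∫ u in Ioo b0 1, (∫ v, (f u - f v) * (g u - g v) ∂P) ∂P
      ≤ ∫ u, (∫ v, (f u - f v) * (g u - g v) ∂P) ∂P := by
    refine setIntegral_le_integral houter_int ?_
    filter_upwards [ae_restrict_mem measurableSet_Ioo] with u hu
    exact h_nonneg hf hg hmf hmg hu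
  have h4 : δf * δg * a0 * ((volume.restrict (Ioo (0:ℝ) 1)) (Ioo b0 1)).toReal
      ≤ ∫ u in Ioo b0 1, (∫ v, (f u - f v) * (g u - g v) ∂P) ∂P :=
    setIntegral_ge_of_const_le_real measurableSet_Ioo (measure_ne_top _ _)
      (fun u hu => hinner u hu) houter_int.integrableOn
  rw [hPB] at h4
  have hpos : 0 < δf * δg * a0 * (1 - b0) := by
    apply mul_pos (mul_pos (mul_pos hδfpos hδgpos) ha0) (by linarith)
  have := cov'_double hf hg
  linarith

end Cov

section Transfer

local notation "P" => volume.restrict (Ioo (0:ℝ) 1)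

variable (ν : Measure ℝ) [IsProbabilityMeasure ν]

lemma quantile_memL2 (hν2 : MemLp (fun x : ℝ => x) 2 ν) :
    MemLp (quantile ν) 2 P := by
  rw [← map_quantile ν] at hν2
  exact (memLp_map_measure_iff aestronglyMeasurable_id (quantile_aemeasurable ν)).mp hν2

lemma int_q : ∫ p, quantile ν p ∂P = ∫ x, x ∂ν := by
  conv_rhs => rw [← map_quantile ν]
  exact (integral_map (quantile_aemeasurable ν) aestronglyMeasurable_id).symm

lemma int_qq : ∫ p, quantile ν p * quantile ν p ∂P = ∫ x, x * x ∂ν := by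
  conv_rhs => rw [← map_quantile ν]
  exact (integral_map (quantile_aemeasurable ν)
    ((measurable_id.mul measurable_id).aestronglyMeasurable)).symm

lemma var_q : var' P (quantile ν) = var' ν (fun x => x) := by
  simp only [var', cov', int_q, int_qq]

lemma quantile_nonconst (hvar : 0 < var' ν (fun x => x)) :
    ∃ u ∈ Ioo (0:ℝ) 1, ∃ v ∈ Ioo (0:ℝ) 1, u < v ∧ quantile ν u < quantile ν v := by
  by_contra hcon
  push_neg at hcon
  have hhalf : (1/2 : ℝ) ∈ Ioo (0:ℝ) 1 := by norm_num
  have hconst : ∀ u ∈ Ioo (0:ℝ) 1, quantile ν u = quantile ν (1/2) := by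
    intro u hu
    rcases lt_trichotomy u (1/2) with h | h | h
    · exact le_antisymm (quantile_monoOn ν hu hhalf h.le) (hcon u hu (1/2) hhalf h)
    · rw [h]
    · exact le_antisymm (hcon (1/2) hhalf u hu h) (quantile_monoOn ν hhalf hu h.le)
  have hae : quantile ν =ᵐ[P] fun _ => quantile ν (1/2) := by
    filter_upwards [ae_restrict_mem measurableSet_Ioo] with u hu using hconst u hu
  have h1 : ∫ p, quantile ν p ∂P = quantile ν (1/2) := by
    rw [integral_congr_ae hae, integral_const]
    simp
  have h2 : ∫ p, quantile ν p * quantile ν p ∂P = quantile ν (1/2) * quantile ν (1/2) := by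
    have : (fun p => quantile ν p * quantile ν p)
        =ᵐ[P] fun _ => quantile ν (1/2) * quantile ν (1/2) := by
      filter_upwards [hae] with u hu
      rw [hu]
    rw [integral_congr_ae this, integral_const]
    simp
  have hz : var' P (quantile ν) = 0 := by
    simp only [var', cov', h1, h2]
    ring
  rw [var_q] at hz
  linarith

end Transfer

theorem stmt_13 {Ω : Type*} [MeasurableSpace Ω] (μ : Measure Ω) [IsProbabilityMeasure μ]
    (U : Ω → ℝ) (hUm : Measurable U)
    (hU : Measure.map U μ = volume.restrict (Set.Ioo (0 : ℝ) 1))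
    {d : ℕ} (ν : Fin d → Measure ℝ) (hνp : ∀ i, IsProbabilityMeasure (ν i))
    (hν2 : ∀ i, MemLp (fun x : ℝ => x) 2 (ν i)) (hνvar : ∀ i, 0 < var' (ν i) (fun x => x))
    (w : Fin d → ℝ) (hw : ∀ i, 0 ≤ w i)
    (hex : ∃ i j, i ≠ j ∧ 0 < w i ∧ 0 < w j) :
    0 < ∑ p ∈ Finset.univ.offDiag, w p.1 * w p.2 *
      cov' μ (fun ω => quantile (ν p.1) (U ω)) (fun ω => quantile (ν p.2) (U ω)) := by
  haveI := hνp
  have hcov_transfer : ∀ k l : Fin d,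
      cov' μ (fun ω => quantile (ν k) (U ω)) (fun ω => quantile (ν l) (U ω))
        = cov' (volume.restrict (Ioo (0:ℝ) 1)) (quantile (ν k)) (quantile (ν l)) := by
    intro k l
    have hint : ∀ m : Fin d, ∫ ω, quantile (ν m) (U ω) ∂μ
        = ∫ p, quantile (ν m) p ∂(volume.restrict (Ioo (0:ℝ) 1)) := by
      intro m
      have hq : AEStronglyMeasurable (quantile (ν m)) (Measure.map U μ) := by
        rw [hU]; exact (quantile_aemeasurable (ν m)).aestronglyMeasurable
      rw [← integral_map hUm.aemeasurable hq, hU]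
    have hprod : ∫ ω, quantile (ν k) (U ω) * quantile (ν l) (U ω) ∂μ
        = ∫ p, quantile (ν k) p * quantile (ν l) p ∂(volume.restrict (Ioo (0:ℝ) 1)) := by
      have hq : AEStronglyMeasurable (fun p => quantile (ν k) p * quantile (ν l) p)
          (Measure.map U μ) := by
        rw [hU]
        exact ((quantile_aemeasurable (ν k)).mul (quantile_aemeasurable (ν l))).aestronglyMeasurable
      rw [← integral_map hUm.aemeasurable hq, hU]
    simp only [cov', hint, hprod]
  have hL2 : ∀ m : Fin d, MemLp (quantile (ν m)) 2 (volume.restrict (Ioo (0:ℝ) 1)) :=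
    fun m => quantile_memL2 (ν m) (hν2 m)
  have hmono : ∀ m : Fin d, MonotoneOn (quantile (ν m)) (Ioo 0 1) :=
    fun m => quantile_monoOn (ν m)
  have hnc : ∀ m : Fin d, ∃ u ∈ Ioo (0:ℝ) 1, ∃ v ∈ Ioo (0:ℝ) 1,
      u < v ∧ quantile (ν m) u < quantile (ν m) v :=
    fun m => quantile_nonconst (ν m) (hνvar m)
  refine Finset.sum_pos' ?_ ?_
  · intro p _
    rw [hcov_transfer p.1 p.2]
    exact mul_nonneg (mul_nonneg (hw _) (hw _))
      (cov'_nonneg (hL2 p.1) (hL2 p.2) (hmono p.1) (hmono p.2))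
  · obtain ⟨i, j, hij, hwi, hwj⟩ := hex
    refine ⟨(i, j), Finset.mem_offDiag.mpr ⟨Finset.mem_univ _, Finset.mem_univ _, hij⟩, ?_⟩
    rw [hcov_transfer i j]
    exact mul_pos (mul_pos hwi hwj)
      (cov'_pos (hL2 i) (hL2 j) (hmono i) (hmono j) (hnc i) (hnc j))
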